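/- Let n, m, r be natural numbers with m < n and r + n + 1 ≤ 2m. Let α, β, γ, δ be partial bijections of Fin n, each of rank r + 1, such that α·β = γ·δ and rank(α·β) = r. Then, in the free semigroup on the alphabet X = {μ ∈ I_n : r + 1 ≤ rank(μ) ≤ r + 2}, the pair (x_α·x_β, x_γ·x_δ) lies in the congruence generated by R = {(x_μ·x_ν, x_{μν}) : r + 1 ≤ rank(μ), rank(ν), rank(μ·ν) ≤ r + 2}; that is, x_α x_β = x_γ x_δ is a consequence of R. -/

import Mathlib

/-- The symmetric inverse monoid on `Fin n`: partial bijections under composition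
(`α * β` means "first apply `α`, then `β`"). -/
instance (n : ℕ) : Semigroup (PEquiv (Fin n) (Fin n)) where
  mul := PEquiv.trans
  mul_assoc a b c := by
    show (a.trans b).trans c = a.trans (b.trans c)
    ext x y
    simp [PEquiv.trans, Option.bind_assoc]

/-- The rank of a partial bijection: the cardinality of its domain. -/
noncomputable def prank {n : ℕ} (a : PEquiv (Fin n) (Fin n)) : ℕ :=
  Set.ncard {x : Fin n | (a x).isSome}

/-- The alphabet `X_{i,m}`: partial bijections `a` with `i ≤ rank a ≤ m`. -/
abbrev IX (n m i : ℕ) : Type :=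
  {a : PEquiv (Fin n) (Fin n) // i ≤ prank a ∧ prank a ≤ m}

/-- The relations `R_{i,m}` of the restricted Cayley table presentation. -/
def IRel (n m i : ℕ) : FreeSemigroup (IX n m i) → FreeSemigroup (IX n m i) → Prop :=
  fun u v =>
    ∃ (a b : PEquiv (Fin n) (Fin n)) (ha : i ≤ prank a ∧ prank a ≤ m)
      (hb : i ≤ prank b ∧ prank b ≤ m) (hab : i ≤ prank (a * b) ∧ prank (a * b) ≤ m),
      u = FreeSemigroup.of (⟨a, ha⟩ : IX n m i) * FreeSemigroup.of ⟨b, hb⟩ ∧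
      v = FreeSemigroup.of ⟨a * b, hab⟩

namespace Stmt10Aux

open Equiv Finset

variable {n : ℕ}

lemma pe_mul_def (a b : PEquiv (Fin n) (Fin n)) : a * b = a.trans b := rfl

/-- restriction of a permutation to a finset, as a partial bijection -/
noncomputable def pres (e : Equiv.Perm (Fin n)) (S : Finset (Fin n)) :
    PEquiv (Fin n) (Fin n) :=
  (PEquiv.ofSet (↑S : Set (Fin n))).trans e.toPEquiv

lemma pres_apply (e : Equiv.Perm (Fin n)) (S : Finset (Fin n)) (x : Fin n) :
    pres e S x = if x ∈ S then some (e x) else none := by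
  have h0 : pres e S x
      = ((PEquiv.ofSet (↑S : Set (Fin n))) x).bind e.toPEquiv := rfl
  rw [h0]
  by_cases hx : x ∈ S
  · simp [PEquiv.ofSet, hx, Equiv.toPEquiv]
  · simp [PEquiv.ofSet, hx]

lemma prank_pres (e : Equiv.Perm (Fin n)) (S : Finset (Fin n)) :
    prank (pres e S) = S.card := by
  have h : {x : Fin n | ((pres e S) x).isSome} = ↑S := by
    ext x
    simp only [Set.mem_setOf_eq, pres_apply, Finset.coe_insert, Set.mem_insert_iff,
      Finset.mem_coe]
    split_ifs with hx <;> simp [hx]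
  rw [prank, h, Set.ncard_coe_finset]

lemma pres_congr {e f : Equiv.Perm (Fin n)} {S : Finset (Fin n)}
    (h : ∀ x ∈ S, e x = f x) : pres e S = pres f S := by
  apply PEquiv.ext; intro x
  rw [pres_apply, pres_apply]
  split_ifs with hx
  · rw [h x hx]
  · rfl

lemma pres_mul (e f : Equiv.Perm (Fin n)) (S T : Finset (Fin n)) :
    pres e S * pres f T = pres (e.trans f) (S.filter (fun x => e x ∈ T)) := by
  apply PEquiv.ext; intro x
  have : (pres e S * pres f T) x = ((pres e S) x).bind (pres f T) := rfl
  rw [this, pres_apply, pres_apply]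
  by_cases hx : x ∈ S
  · by_cases hex : e x ∈ T
    · simp [hx, hex, pres_apply, Equiv.trans_apply]
    · simp [hx, hex, pres_apply]
  · simp [hx, fun h : x ∈ S.filter (fun x => e x ∈ T) => hx (Finset.mem_filter.1 h).1,
      Finset.mem_filter]

lemma pres_mul_eq {e f g : Equiv.Perm (Fin n)} {S T U : Finset (Fin n)}
    (hU : S.filter (fun x => e x ∈ T) = U) (hval : ∀ x ∈ U, f (e x) = g x) :
    pres e S * pres f T = pres g U := by
  rw [pres_mul, hU]
  exact pres_congr (fun x hx => by rw [Equiv.trans_apply, hval x hx])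

lemma pres_dom_eq {e f : Equiv.Perm (Fin n)} {S T : Finset (Fin n)}
    (h : pres e S = pres f T) : S = T := by
  ext x
  have hx := congrArg (fun pe : PEquiv (Fin n) (Fin n) => (pe x).isSome) h
  simp only [pres_apply] at hx
  by_cases h1 : x ∈ S <;> by_cases h2 : x ∈ T <;> simp [h1, h2] at hx ⊢

lemma pres_val_eq {e f : Equiv.Perm (Fin n)} {S T : Finset (Fin n)}
    (h : pres e S = pres f T) : ∀ x ∈ S, e x = f x := by
  intro x hx
  have hST := pres_dom_eq h
  have hx' := congrArg (fun pe : PEquiv (Fin n) (Fin n) => pe x) h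
  simp only [pres_apply, hx, if_pos, hST ▸ hx] at hx'
  exact Option.some_injective _ hx'

/-- every partial bijection of `Fin n` is a restriction of a permutation -/
lemma exists_pres (pe : PEquiv (Fin n) (Fin n)) :
    ∃ (e : Equiv.Perm (Fin n)) (S : Finset (Fin n)), pe = pres e S := by
  classical
  set p : Fin n → Prop := fun x => (pe x).isSome with hp
  set q : Fin n → Prop := fun y => (pe.symm y).isSome with hq
  have key : ∀ (x : Fin n) (h : (pe x).isSome), pe.symm ((pe x).get h) = some x := by
    intro x h
    have h1 : ((pe x).get h) ∈ pe x := Option.get_mem h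
    exact Option.mem_def.1 ((PEquiv.mem_iff_mem pe).2 h1)
  have key' : ∀ (y : Fin n) (h : (pe.symm y).isSome), pe ((pe.symm y).get h) = some y := by
    intro y h
    have h1 : ((pe.symm y).get h) ∈ pe.symm y := Option.get_mem h
    exact Option.mem_def.1 ((PEquiv.mem_iff_mem pe.symm).2 h1)
  let e₁ : {x // p x} ≃ {y // q y} :=
    { toFun := fun x => ⟨(pe x.1).get x.2, by
        show (pe.symm _).isSome
        rw [key x.1 x.2]; rfl⟩
      invFun := fun y => ⟨(pe.symm y.1).get y.2, by
        show (pe _).isSome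
        rw [key' y.1 y.2]; rfl⟩
      left_inv := fun x => by
        apply Subtype.ext
        simp only
        have := key x.1 x.2
        simp [this]
      right_inv := fun y => by
        apply Subtype.ext
        simp only
        have := key' y.1 y.2
        simp [this] }
  have hcard : Fintype.card {x // ¬ p x} = Fintype.card {y // ¬ q y} := by
    rw [Fintype.card_subtype_compl, Fintype.card_subtype_compl,
      Fintype.card_congr e₁]
  let e₂ : {x // ¬ p x} ≃ {y // ¬ q y} := Fintype.equivOfCardEq hcard
  let e : Equiv.Perm (Fin n) :=
    (Equiv.sumCompl p).symm.trans ((Equiv.sumCongr e₁ e₂).trans (Equiv.sumCompl q))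
  refine ⟨e, Finset.univ.filter p, ?_⟩
  apply PEquiv.ext; intro x
  rw [pres_apply]
  by_cases hx : p x
  · rw [if_pos (by simpa using hx)]
    have he : e x = (pe x).get hx := by
      show ((Equiv.sumCompl p).symm.trans ((Equiv.sumCongr e₁ e₂).trans (Equiv.sumCompl q))) x
        = _
      rw [Equiv.trans_apply, Equiv.sumCompl_symm_apply_of_pos (p := p) hx, Equiv.trans_apply]
      rfl
    rw [he, Option.some_get]
  · rw [if_neg (by simpa using hx)]
    exact Option.not_isSome_iff_eq_none.1 hx

/-- double-transposition routing permutation -/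
def pml (x₁ y₁ x₂ y₂ : Fin n) : Equiv.Perm (Fin n) :=
  (Equiv.swap x₁ y₁).trans (Equiv.swap ((Equiv.swap x₁ y₁) x₂) y₂)

lemma pml_left {x₁ y₁ x₂ y₂ : Fin n} (h12 : x₁ ≠ x₂) (hy : y₁ ≠ y₂) :
    pml x₁ y₁ x₂ y₂ x₁ = y₁ := by
  rw [pml, Equiv.trans_apply, Equiv.swap_apply_left]
  apply Equiv.swap_apply_of_ne_of_ne _ hy
  intro hcon
  exact h12 ((Equiv.swap x₁ y₁).injective (by rw [Equiv.swap_apply_left]; exact hcon))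

lemma pml_right {x₁ y₁ x₂ y₂ : Fin n} : pml x₁ y₁ x₂ y₂ x₂ = y₂ := by
  rw [pml, Equiv.trans_apply, Equiv.swap_apply_left]

lemma pml_fix {x₁ y₁ x₂ y₂ x : Fin n} (h1 : x ≠ x₁) (h2 : x ≠ y₁) (h3 : x ≠ x₂)
    (h4 : x ≠ y₂) : pml x₁ y₁ x₂ y₂ x = x := by
  rw [pml, Equiv.trans_apply, Equiv.swap_apply_of_ne_of_ne h1 h2]
  apply Equiv.swap_apply_of_ne_of_ne _ h4
  intro hcon
  apply h3
  have hswap : Equiv.swap x₁ y₁ x = x := Equiv.swap_apply_of_ne_of_ne h1 h2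
  have h5 : Equiv.swap x₁ y₁ x₂ = Equiv.swap x₁ y₁ x := by rw [hswap]; exact hcon.symm
  exact ((Equiv.swap x₁ y₁).injective h5).symm

/-- basic generating relation step -/
lemma base {m i : ℕ} {a b : PEquiv (Fin n) (Fin n)}
    (ha : i ≤ prank a ∧ prank a ≤ m) (hb : i ≤ prank b ∧ prank b ≤ m)
    (hab : i ≤ prank (a * b) ∧ prank (a * b) ≤ m) :
    ConGen.Rel (IRel n m i)
      (FreeSemigroup.of (⟨a, ha⟩ : IX n m i) * FreeSemigroup.of ⟨b, hb⟩)
      (FreeSemigroup.of ⟨a * b, hab⟩) :=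
  ConGen.Rel.of _ _ (show IRel n m i
    (FreeSemigroup.of (⟨a, ha⟩ : IX n m i) * FreeSemigroup.of ⟨b, hb⟩)
    (FreeSemigroup.of ⟨a * b, hab⟩) from ⟨a, b, ha, hb, hab, rfl, rfl⟩)

lemma moveA {m i : ℕ} {l σ τ ρ l₂ : PEquiv (Fin n) (Fin n)}
    (hl : i ≤ prank l ∧ prank l ≤ m) (hρ : i ≤ prank ρ ∧ prank ρ ≤ m)
    (hσ : i ≤ prank σ ∧ prank σ ≤ m) (hτ : i ≤ prank τ ∧ prank τ ≤ m)
    (hl₂ : i ≤ prank l₂ ∧ prank l₂ ≤ m)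
    (h1 : σ * τ = ρ) (h2 : l * σ = l₂) :
    ConGen.Rel (IRel n m i)
      (FreeSemigroup.of (⟨l, hl⟩ : IX n m i) * FreeSemigroup.of ⟨ρ, hρ⟩)
      (FreeSemigroup.of (⟨l₂, hl₂⟩ : IX n m i) * FreeSemigroup.of ⟨τ, hτ⟩) := by
  subst h1; subst h2
  have m1 := ConGen.Rel.mul (ConGen.Rel.refl (FreeSemigroup.of (⟨l, hl⟩ : IX n m i)))
    (ConGen.Rel.symm (base hσ hτ hρ))
  rw [← mul_assoc] at m1
  exact m1.trans (ConGen.Rel.mul (base hl hσ hl₂)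
    (ConGen.Rel.refl (FreeSemigroup.of (⟨τ, hτ⟩ : IX n m i))))

lemma moveB {m i : ℕ} {l ρ σ τ ρ₂ : PEquiv (Fin n) (Fin n)}
    (hl : i ≤ prank l ∧ prank l ≤ m) (hρ : i ≤ prank ρ ∧ prank ρ ≤ m)
    (hσ : i ≤ prank σ ∧ prank σ ≤ m) (hτ : i ≤ prank τ ∧ prank τ ≤ m)
    (hρ₂ : i ≤ prank ρ₂ ∧ prank ρ₂ ≤ m)
    (h1 : σ * τ = l) (h2 : τ * ρ = ρ₂) :
    ConGen.Rel (IRel n m i)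
      (FreeSemigroup.of (⟨l, hl⟩ : IX n m i) * FreeSemigroup.of ⟨ρ, hρ⟩)
      (FreeSemigroup.of (⟨σ, hσ⟩ : IX n m i) * FreeSemigroup.of ⟨ρ₂, hρ₂⟩) := by
  subst h1; subst h2
  have m1 := ConGen.Rel.mul (ConGen.Rel.symm (base hσ hτ hl))
    (ConGen.Rel.refl (FreeSemigroup.of (⟨ρ, hρ⟩ : IX n m i)))
  rw [mul_assoc] at m1
  exact m1.trans (ConGen.Rel.mul (ConGen.Rel.refl (FreeSemigroup.of (⟨σ, hσ⟩ : IX n m i)))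
    (base hτ hρ hρ₂))

lemma decompose (P1 P2 : Equiv.Perm (Fin n)) (S1 S2 : Finset (Fin n)) (r : ℕ)
    (h1 : S1.card = r + 1) (h2 : S2.card = r + 1)
    (hK : (S1.filter (fun x => P1 x ∈ S2)).card = r) :
    ∃ a q, a ∉ S1.filter (fun x => P1 x ∈ S2) ∧
      S1 = insert a (S1.filter (fun x => P1 x ∈ S2)) ∧
      q ∈ S2 ∧ (∀ x ∈ S1, P1 x ≠ q) := by
  classical
  set K := S1.filter (fun x => P1 x ∈ S2) with hKdef
  have hsub : K ⊆ S1 := Finset.filter_subset _ _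
  have hd : (S1 \ K).card = 1 := by
    rw [Finset.card_sdiff_of_subset hsub, h1, hK]
    omega
  obtain ⟨a, ha⟩ := Finset.card_eq_one.1 hd
  have haS : a ∈ S1 ∧ a ∉ K := by
    have : a ∈ S1 \ K := ha ▸ Finset.mem_singleton_self a
    exact ⟨(Finset.mem_sdiff.1 this).1, (Finset.mem_sdiff.1 this).2⟩
  have hq : ∃ q ∈ S2, ∀ x ∈ S1, P1 x ≠ q := by
    by_contra hcon
    push_neg at hcon
    have hsub2 : S2 ⊆ K.image P1 := by
      intro y hy
      obtain ⟨x, hx, hxy⟩ := hcon y hy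
      exact Finset.mem_image.2 ⟨x, Finset.mem_filter.2 ⟨hx, by rw [hxy]; exact hy⟩, hxy⟩
    have hc1 := Finset.card_le_card hsub2
    have hc2 := Finset.card_image_le (s := K) (f := P1)
    omega
  obtain ⟨q, hq1, hq2⟩ := hq
  refine ⟨a, q, haS.2, ?_, hq1, hq2⟩
  apply Finset.eq_of_subset_of_card_le
  · intro x hx
    by_cases hxK : x ∈ K
    · exact Finset.mem_insert_of_mem hxK
    · have : x ∈ S1 \ K := Finset.mem_sdiff.2 ⟨hx, hxK⟩
      rw [ha] at this
      exact Finset.mem_insert.2 (Or.inl (Finset.mem_singleton.1 this))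
  · rw [h1, Finset.card_insert_of_notMem haS.2, hK]

end Stmt10Aux


open Stmt10Aux Equiv Finset

/-- In the symmetric inverse monoid, if `α, β, γ, δ` have rank `r + 1`, `αβ = γδ` and
`rank (αβ) = r`, then `x_α x_β = x_γ x_δ` is a consequence of the Cayley relations among
elements of rank `r + 1` and `r + 2` (assuming `m < n` and `r + n + 1 ≤ 2m`). -/
theorem stmt_10 (n m r : ℕ) (hm : m < n) (hr : r + n + 1 ≤ 2 * m)
    (α β γ δ : PEquiv (Fin n) (Fin n))
    (hα : prank α = r + 1) (hβ : prank β = r + 1)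
    (hγ : prank γ = r + 1) (hδ : prank δ = r + 1)
    (heq : α * β = γ * δ) (hrank : prank (α * β) = r) :
    conGen (IRel n (r + 2) (r + 1))
      (FreeSemigroup.of (⟨α, by omega⟩ : IX n (r + 2) (r + 1)) *
        FreeSemigroup.of (⟨β, by omega⟩ : IX n (r + 2) (r + 1)))
      (FreeSemigroup.of (⟨γ, by omega⟩ : IX n (r + 2) (r + 1)) *
        FreeSemigroup.of (⟨δ, by omega⟩ : IX n (r + 2) (r + 1))) := by
  classical
  obtain ⟨Pa, Sa, hPa⟩ := exists_pres α
  obtain ⟨Pb, Sb, hPb⟩ := exists_pres β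
  obtain ⟨Pc, Sc, hPc⟩ := exists_pres γ
  obtain ⟨Pd, Sd, hPd⟩ := exists_pres δ
  have hSa : Sa.card = r + 1 := by rw [hPa, prank_pres] at hα; exact hα
  have hSb : Sb.card = r + 1 := by rw [hPb, prank_pres] at hβ; exact hβ
  have hSc : Sc.card = r + 1 := by rw [hPc, prank_pres] at hγ; exact hγ
  have hSd : Sd.card = r + 1 := by rw [hPd, prank_pres] at hδ; exact hδ
  obtain ⟨K, hKdef⟩ : ∃ K, Sa.filter (fun x => Pa x ∈ Sb) = K := ⟨_, rfl⟩
  obtain ⟨K', hK'def⟩ : ∃ K', Sc.filter (fun x => Pc x ∈ Sd) = K' := ⟨_, rfl⟩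
  obtain ⟨Qe, hQedef⟩ : ∃ Q, Pa.trans Pb = Q := ⟨_, rfl⟩
  obtain ⟨Qe', hQ'def⟩ : ∃ Q, Pc.trans Pd = Q := ⟨_, rfl⟩
  have hαβ : α * β = pres Qe K := by rw [hPa, hPb, pres_mul, hKdef, hQedef]
  have hγδ : γ * δ = pres Qe' K' := by rw [hPc, hPd, pres_mul, hK'def, hQ'def]
  have hK : K.card = r := by rw [hαβ, prank_pres] at hrank; exact hrank
  have hQQ' : pres Qe K = pres Qe' K' := by rw [← hαβ, ← hγδ, heq]
  have hKK' : K = K' := pres_dom_eq hQQ'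
  have hvalQ : ∀ x ∈ K, Qe x = Qe' x := pres_val_eq hQQ'
  obtain ⟨a, q, hanK, hSa2, hqSb, hqim⟩ := decompose Pa Pb Sa Sb r hSa hSb (by rw [hKdef]; exact hK)
  obtain ⟨c, q', hcnK', hSc2, hq'Sd, hq'im⟩ :=
    decompose Pc Pd Sc Sd r hSc hSd (by rw [hK'def, ← hKK']; exact hK)
  rw [hKdef] at hanK hSa2
  rw [hK'def] at hcnK' hSc2
  have hcnK : c ∉ K := by rw [hKK']; exact hcnK'
  obtain ⟨s, hs⟩ : ∃ s, Pb q = s := ⟨_, rfl⟩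
  obtain ⟨s', hs'⟩ : ∃ s', Pd q' = s' := ⟨_, rfl⟩
  have haSa : a ∈ Sa := by rw [hSa2]; exact mem_insert_self _ _
  have hcSc : c ∈ Sc := by rw [hSc2]; exact mem_insert_self _ _
  have hKSa : K ⊆ Sa := hKdef ▸ filter_subset _ _
  have hK'Sc : K' ⊆ Sc := hK'def ▸ filter_subset _ _
  have hpa : Pa a ∉ Sb := fun h => hanK (hKdef ▸ mem_filter.2 ⟨haSa, h⟩)
  have hpc : Pc c ∉ Sd := fun h => hcnK' (hK'def ▸ mem_filter.2 ⟨hcSc, h⟩)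
  -- avoid `Pa.symm q` collisions
  have hPsymq : ∀ x ∈ Sa, x ≠ Pa.symm q := by
    intro x hx hcon
    exact hqim x hx (by rw [hcon, Equiv.apply_symm_apply])
  have hPsymq' : ∀ x ∈ Sc, x ≠ Pc.symm q' := by
    intro x hx hcon
    exact hq'im x hx (by rw [hcon, Equiv.apply_symm_apply])
  have hKfilter : ∀ x ∈ K, Pa x ∈ Sb := by
    intro x hx
    rw [← hKdef] at hx
    exact (mem_filter.1 hx).2
  have hK'filter : ∀ x ∈ K, Pc x ∈ Sd := by
    intro x hx
    rw [hKK', ← hK'def] at hx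
    exact (mem_filter.1 hx).2
  have hQs : ∀ x ∈ K, Qe x ≠ s := by
    intro x hx hcon
    apply hqim x (hKSa hx)
    apply Pb.injective
    rw [hs]
    rw [← hQedef] at hcon
    exact hcon
  have hQs' : ∀ x ∈ K, Qe x ≠ s' := by
    intro x hx hcon
    apply hq'im x (hK'Sc (hKK' ▸ hx))
    apply Pd.injective
    rw [hs']
    rw [hvalQ x hx, ← hQ'def] at hcon
    exact hcon
  have hQsymmS : Qe.symm s ∉ K := fun hx => hQs _ hx (Qe.apply_symm_apply s)
  have hQsymmS' : Qe.symm s' ∉ K := fun hx => hQs' _ hx (Qe.apply_symm_apply s')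
  -- fresh points
  have fresh : ∀ T : Finset (Fin n), T.card < n → ∃ x, x ∉ T := by
    intro T hT
    by_contra hcon
    push_neg at hcon
    have : (univ : Finset (Fin n)) ⊆ T := fun x _ => hcon x
    have := card_le_card this
    rw [card_univ, Fintype.card_fin] at this
    omega
  have hn3 : r + 3 ≤ n := by omega
  obtain ⟨g₁, hg₁⟩ := fresh (insert a (insert c K)) (by
    have h1 := card_insert_le a (insert c K)
    have h2 := card_insert_le c K
    omega)
  have hg₁a : g₁ ≠ a := fun h => hg₁ (by rw [h]; exact mem_insert_self _ _)
  have hg₁c : g₁ ≠ c := fun h => hg₁ (by rw [h]; exact mem_insert_of_mem (mem_insert_self _ _))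
  have hg₁K : g₁ ∉ K := fun h => hg₁ (mem_insert_of_mem (mem_insert_of_mem h))
  obtain ⟨z, hz⟩ := fresh (insert a (insert g₁ K)) (by
    have h1 := card_insert_le a (insert g₁ K)
    have h2 := card_insert_le g₁ K
    omega)
  have hza : z ≠ a := fun h => hz (by rw [h]; exact mem_insert_self _ _)
  have hzg₁ : z ≠ g₁ := fun h => hz (by rw [h]; exact mem_insert_of_mem (mem_insert_self _ _))
  have hzK : z ∉ K := fun h => hz (mem_insert_of_mem (mem_insert_of_mem h))
  -- rank conditions
  have cond1 : ∀ (E : Perm (Fin n)) (x : Fin n), x ∉ K →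
      r + 1 ≤ prank (pres E (insert x K)) ∧ prank (pres E (insert x K)) ≤ r + 2 := by
    intro E x hx
    rw [prank_pres, card_insert_of_notMem hx, hK]
    omega
  have cond2 : ∀ (E : Perm (Fin n)) (x y : Fin n), x ≠ y → x ∉ K → y ∉ K →
      r + 1 ≤ prank (pres E (insert x (insert y K))) ∧
        prank (pres E (insert x (insert y K))) ≤ r + 2 := by
    intro E x y hxy hx hy
    have : x ∉ insert y K := by
      simp only [mem_insert]
      push_neg
      exact ⟨hxy, hx⟩
    rw [prank_pres, card_insert_of_notMem this, card_insert_of_notMem hy, hK]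
    omega
  have condα : r + 1 ≤ prank α ∧ prank α ≤ r + 2 := by omega
  have condβ : r + 1 ≤ prank β ∧ prank β ≤ r + 2 := by omega
  have condγ : r + 1 ≤ prank γ ∧ prank γ ≤ r + 2 := by omega
  have condδ : r + 1 ≤ prank δ ∧ prank δ ≤ r + 2 := by omega
  have swapK : ∀ (u v : Fin n), u ∉ K → v ∉ K → ∀ x ∈ K, Equiv.swap u v x = x :=
    fun u v hu hv x hx =>
      Equiv.swap_apply_of_ne_of_ne (ne_of_mem_of_not_mem hx hu) (ne_of_mem_of_not_mem hx hv)
  -- ==================== MOVE 1 ====================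
  have e1a : pres 1 (insert a K) * pres ((swap g₁ (Pa.symm q)).trans Pa)
      (insert g₁ (insert a K)) = α := by
    rw [hPa, hSa2]
    apply pres_mul_eq
    · apply filter_true_of_mem
      intro x hx
      rw [Equiv.Perm.one_apply]
      exact mem_insert_of_mem hx
    · intro x hx
      rw [Equiv.Perm.one_apply, Equiv.trans_apply,
        Equiv.swap_apply_of_ne_of_ne ?h1 (hPsymq x (hSa2 ▸ hx))]
      case h1 =>
        rcases mem_insert.1 hx with rfl | hxK
        · exact hg₁a.symm
        · exact ne_of_mem_of_not_mem hxK hg₁K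
  have e1b : pres ((swap g₁ (Pa.symm q)).trans Pa) (insert g₁ (insert a K)) * β
      = pres ((swap g₁ (Qe.symm s)).trans Qe) (insert g₁ K) := by
    rw [hPb]
    apply pres_mul_eq
    · ext x
      simp only [mem_filter, mem_insert]
      constructor
      · rintro ⟨rfl | rfl | hxK, hmem⟩
        · exact Or.inl rfl
        · exfalso
          rw [Equiv.trans_apply, Equiv.swap_apply_of_ne_of_ne hg₁a.symm
            (hPsymq x haSa)] at hmem
          exact hpa hmem
        · exact Or.inr hxK
      · rintro (rfl | hxK)
        · refine ⟨Or.inl rfl, ?_⟩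
          rw [Equiv.trans_apply, Equiv.swap_apply_left, Equiv.apply_symm_apply]
          exact hqSb
        · refine ⟨Or.inr (Or.inr hxK), ?_⟩
          rw [Equiv.trans_apply, Equiv.swap_apply_of_ne_of_ne
            (ne_of_mem_of_not_mem hxK hg₁K) (hPsymq x (hKSa hxK))]
          exact hKfilter x hxK
    · intro x hx
      rcases mem_insert.1 hx with rfl | hxK
      · rw [Equiv.trans_apply, Equiv.swap_apply_left, Equiv.apply_symm_apply,
          Equiv.trans_apply, Equiv.swap_apply_left, Equiv.apply_symm_apply]
        exact hs
      · rw [Equiv.trans_apply, Equiv.swap_apply_of_ne_of_ne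
          (ne_of_mem_of_not_mem hxK hg₁K) (hPsymq x (hKSa hxK)),
          Equiv.trans_apply, swapK g₁ (Qe.symm s) hg₁K hQsymmS x hxK, ← hQedef]
        rfl
  have step1 := moveB (n := n) (m := r + 2) (i := r + 1) condα condβ
    (cond1 1 a hanK) (cond2 _ g₁ a hg₁a hg₁K hanK) (cond1 _ g₁ hg₁K) e1a e1b
  -- ==================== s-change (moves 2,3) ====================
  have stepS : ConGen.Rel (IRel n (r + 2) (r + 1))
      (FreeSemigroup.of (⟨pres 1 (insert a K), cond1 1 a hanK⟩ : IX n (r + 2) (r + 1)) *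
        FreeSemigroup.of ⟨pres ((swap g₁ (Qe.symm s)).trans Qe) (insert g₁ K),
          cond1 _ g₁ hg₁K⟩)
      (FreeSemigroup.of (⟨pres 1 (insert a K), cond1 1 a hanK⟩ : IX n (r + 2) (r + 1)) *
        FreeSemigroup.of ⟨pres ((swap g₁ (Qe.symm s')).trans Qe) (insert g₁ K),
          cond1 _ g₁ hg₁K⟩) := by
    by_cases hss : s = s'
    · subst hss
      exact ConGen.Rel.refl _
    · have hQsQs' : Qe.symm s ≠ Qe.symm s' := fun h => hss (by
        have h2 := congrArg Qe h
        rwa [Equiv.apply_symm_apply, Equiv.apply_symm_apply] at h2)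
    -- move 2
      have e2a : pres (swap a z) (insert g₁ (insert a K)) *
          pres ((pml g₁ (Qe.symm s) a (Qe.symm s')).trans Qe) (insert g₁ (insert a K))
          = pres ((swap g₁ (Qe.symm s)).trans Qe) (insert g₁ K) := by
        apply pres_mul_eq
        · ext x
          simp only [mem_filter, mem_insert]
          constructor
          · rintro ⟨rfl | rfl | hxK, hmem⟩
            · exact Or.inl rfl
            · exfalso
              rw [Equiv.swap_apply_left] at hmem
              rcases hmem with h | h | h
              · exact hzg₁ h
              · exact hza h
              · exact hzK h
            · exact Or.inr hxK
          · rintro (rfl | hxK)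
            · refine ⟨Or.inl rfl, ?_⟩
              rw [Equiv.swap_apply_of_ne_of_ne hg₁a (Ne.symm hzg₁)]
              exact Or.inl rfl
            · refine ⟨Or.inr (Or.inr hxK), ?_⟩
              rw [swapK a z hanK hzK x hxK]
              exact Or.inr (Or.inr hxK)
        · intro x hx
          rcases mem_insert.1 hx with rfl | hxK
          · rw [Equiv.swap_apply_of_ne_of_ne hg₁a (Ne.symm hzg₁), Equiv.trans_apply,
              pml_left hg₁a hQsQs', Equiv.trans_apply, Equiv.swap_apply_left]
          · rw [swapK a z hanK hzK x hxK, Equiv.trans_apply,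
              pml_fix (ne_of_mem_of_not_mem hxK hg₁K) (ne_of_mem_of_not_mem hxK hQsymmS)
                (ne_of_mem_of_not_mem hxK hanK) (ne_of_mem_of_not_mem hxK hQsymmS'),
              Equiv.trans_apply, swapK g₁ (Qe.symm s) hg₁K hQsymmS x hxK]
      have e2b : pres 1 (insert a K) * pres (swap a z) (insert g₁ (insert a K))
          = pres (swap a z) (insert a K) := by
        apply pres_mul_eq
        · apply filter_true_of_mem
          intro x hx
          rw [Equiv.Perm.one_apply]
          exact mem_insert_of_mem hx
        · intro x _
          rw [Equiv.Perm.one_apply]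
      -- move 3
      have e3a : pres 1 (insert a K) * pres (pml a z g₁ a) (insert g₁ (insert a K))
          = pres (swap a z) (insert a K) := by
        apply pres_mul_eq
        · apply filter_true_of_mem
          intro x hx
          rw [Equiv.Perm.one_apply]
          exact mem_insert_of_mem hx
        · intro x hx
          rw [Equiv.Perm.one_apply]
          rcases mem_insert.1 hx with rfl | hxK
          · rw [pml_left (Ne.symm hg₁a) hza, Equiv.swap_apply_left]
          · rw [pml_fix (ne_of_mem_of_not_mem hxK hanK) (ne_of_mem_of_not_mem hxK hzK)
                (ne_of_mem_of_not_mem hxK hg₁K) (ne_of_mem_of_not_mem hxK hanK),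
              swapK a z hanK hzK x hxK]
      have e3b : pres (pml a z g₁ a) (insert g₁ (insert a K)) *
          pres ((pml g₁ (Qe.symm s) a (Qe.symm s')).trans Qe) (insert g₁ (insert a K))
          = pres ((swap g₁ (Qe.symm s')).trans Qe) (insert g₁ K) := by
        apply pres_mul_eq
        · ext x
          simp only [mem_filter, mem_insert]
          constructor
          · rintro ⟨rfl | rfl | hxK, hmem⟩
            · exact Or.inl rfl
            · exfalso
              rw [pml_left (Ne.symm hg₁a) hza] at hmem
              rcases hmem with h | h | h
              · exact hzg₁ h
              · exact hza h
              · exact hzK h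
            · exact Or.inr hxK
          · rintro (rfl | hxK)
            · refine ⟨Or.inl rfl, ?_⟩
              rw [pml_right]
              exact Or.inr (Or.inl rfl)
            · refine ⟨Or.inr (Or.inr hxK), ?_⟩
              rw [pml_fix (ne_of_mem_of_not_mem hxK hanK) (ne_of_mem_of_not_mem hxK hzK)
                (ne_of_mem_of_not_mem hxK hg₁K) (ne_of_mem_of_not_mem hxK hanK)]
              exact Or.inr (Or.inr hxK)
        · intro x hx
          rcases mem_insert.1 hx with rfl | hxK
          · rw [pml_right, Equiv.trans_apply, pml_right, Equiv.trans_apply,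
              Equiv.swap_apply_left]
          · rw [pml_fix (ne_of_mem_of_not_mem hxK hanK) (ne_of_mem_of_not_mem hxK hzK)
                (ne_of_mem_of_not_mem hxK hg₁K) (ne_of_mem_of_not_mem hxK hanK),
              Equiv.trans_apply,
              pml_fix (ne_of_mem_of_not_mem hxK hg₁K) (ne_of_mem_of_not_mem hxK hQsymmS)
                (ne_of_mem_of_not_mem hxK hanK) (ne_of_mem_of_not_mem hxK hQsymmS'),
              Equiv.trans_apply, swapK g₁ (Qe.symm s') hg₁K hQsymmS' x hxK]
      exact (moveA (cond1 1 a hanK) (cond1 _ g₁ hg₁K) (cond2 _ g₁ a hg₁a hg₁K hanK)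
        (cond2 _ g₁ a hg₁a hg₁K hanK) (cond1 _ a hanK) e2a e2b).trans
        (moveB (cond1 _ a hanK) (cond2 _ g₁ a hg₁a hg₁K hanK) (cond1 1 a hanK)
          (cond2 _ g₁ a hg₁a hg₁K hanK) (cond1 _ g₁ hg₁K) e3a e3b)
  -- ==================== a-change (moves 4,5,6) ====================
  have stepA : ConGen.Rel (IRel n (r + 2) (r + 1))
      (FreeSemigroup.of (⟨pres 1 (insert a K), cond1 1 a hanK⟩ : IX n (r + 2) (r + 1)) *
        FreeSemigroup.of ⟨pres ((swap g₁ (Qe.symm s')).trans Qe) (insert g₁ K),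
          cond1 _ g₁ hg₁K⟩)
      (FreeSemigroup.of (⟨pres 1 (insert c K), cond1 1 c hcnK⟩ : IX n (r + 2) (r + 1)) *
        FreeSemigroup.of ⟨pres ((swap g₁ (Qe.symm s')).trans Qe) (insert g₁ K),
          cond1 _ g₁ hg₁K⟩) := by
    by_cases hac : a = c
    · subst hac
      exact ConGen.Rel.refl _
    · -- move 4
      have e4a : pres (swap a c) (insert c (insert a K)) *
          pres (swap c a) (insert c (insert g₁ K)) = pres 1 (insert a K) := by
        apply pres_mul_eq
        · ext x
          simp only [mem_filter, mem_insert]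
          constructor
          · rintro ⟨rfl | rfl | hxK, hmem⟩
            · exfalso
              rw [Equiv.swap_apply_right] at hmem
              rcases hmem with h | h | h
              · exact hac h
              · exact hg₁a h.symm
              · exact hanK h
            · exact Or.inl rfl
            · exact Or.inr hxK
          · rintro (rfl | hxK)
            · refine ⟨Or.inr (Or.inl rfl), ?_⟩
              rw [Equiv.swap_apply_left]
              exact Or.inl rfl
            · refine ⟨Or.inr (Or.inr hxK), ?_⟩
              rw [swapK a c hanK hcnK x hxK]
              exact Or.inr (Or.inr hxK)
        · intro x hx
          rw [Equiv.Perm.one_apply]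
          rcases mem_insert.1 hx with rfl | hxK
          · rw [Equiv.swap_apply_left, Equiv.swap_apply_left]
          · rw [swapK a c hanK hcnK x hxK, swapK c a hcnK hanK x hxK]
      have e4b : pres (swap c a) (insert c (insert g₁ K)) *
          pres ((swap g₁ (Qe.symm s')).trans Qe) (insert g₁ K)
          = pres ((swap g₁ (Qe.symm s')).trans Qe) (insert g₁ K) := by
        apply pres_mul_eq
        · ext x
          simp only [mem_filter, mem_insert]
          constructor
          · rintro ⟨rfl | rfl | hxK, hmem⟩
            · exfalso
              rw [Equiv.swap_apply_left] at hmem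
              rcases hmem with h | h
              · exact hg₁a h.symm
              · exact hanK h
            · exact Or.inl rfl
            · exact Or.inr hxK
          · rintro (rfl | hxK)
            · refine ⟨Or.inr (Or.inl rfl), ?_⟩
              rw [Equiv.swap_apply_of_ne_of_ne hg₁c hg₁a]
              exact Or.inl rfl
            · refine ⟨Or.inr (Or.inr hxK), ?_⟩
              rw [swapK c a hcnK hanK x hxK]
              exact Or.inr hxK
        · intro x hx
          rcases mem_insert.1 hx with rfl | hxK
          · rw [Equiv.swap_apply_of_ne_of_ne hg₁c hg₁a]
          · rw [swapK c a hcnK hanK x hxK]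
      -- move 5
      have e5a : pres 1 (insert g₁ (insert a K)) *
          pres ((swap g₁ (Qe.symm s')).trans Qe) (insert g₁ K)
          = pres ((swap g₁ (Qe.symm s')).trans Qe) (insert g₁ K) := by
        apply pres_mul_eq
        · ext x
          simp only [mem_filter, mem_insert, Equiv.Perm.one_apply]
          constructor
          · rintro ⟨rfl | rfl | hxK, hmem⟩
            · exact Or.inl rfl
            · exfalso
              rcases hmem with h | h
              · exact hg₁a h.symm
              · exact hanK h
            · exact Or.inr hxK
          · rintro (rfl | hxK)
            · exact ⟨Or.inl rfl, Or.inl rfl⟩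
            · exact ⟨Or.inr (Or.inr hxK), Or.inr hxK⟩
        · intro x _
          rw [Equiv.Perm.one_apply]
      have e5b : pres (swap a c) (insert c (insert a K)) *
          pres 1 (insert g₁ (insert a K)) = pres (swap c a) (insert c K) := by
        apply pres_mul_eq
        · ext x
          simp only [mem_filter, mem_insert]
          constructor
          · rintro ⟨rfl | rfl | hxK, hmem⟩
            · exact Or.inl rfl
            · exfalso
              rw [Equiv.swap_apply_left] at hmem
              rcases hmem with h | h | h
              · exact hg₁c h.symm
              · exact hac h.symm
              · exact hcnK h
            · exact Or.inr hxK
          · rintro (rfl | hxK)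
            · refine ⟨Or.inl rfl, ?_⟩
              rw [Equiv.swap_apply_right]
              exact Or.inr (Or.inl rfl)
            · refine ⟨Or.inr (Or.inr hxK), ?_⟩
              rw [swapK a c hanK hcnK x hxK]
              exact Or.inr (Or.inr hxK)
        · intro x hx
          rw [Equiv.Perm.one_apply]
          rcases mem_insert.1 hx with rfl | hxK
          · rw [Equiv.swap_apply_right, Equiv.swap_apply_left]
          · rw [swapK a c hanK hcnK x hxK, swapK c a hcnK hanK x hxK]
      -- move 6
      have e6a : pres (swap a c) (insert g₁ (insert a K)) *
          pres ((swap g₁ (Qe.symm s')).trans Qe) (insert g₁ K)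
          = pres ((swap g₁ (Qe.symm s')).trans Qe) (insert g₁ K) := by
        apply pres_mul_eq
        · ext x
          simp only [mem_filter, mem_insert]
          constructor
          · rintro ⟨rfl | rfl | hxK, hmem⟩
            · exact Or.inl rfl
            · exfalso
              rw [Equiv.swap_apply_left] at hmem
              rcases hmem with h | h
              · exact hg₁c h.symm
              · exact hcnK h
            · exact Or.inr hxK
          · rintro (rfl | hxK)
            · refine ⟨Or.inl rfl, ?_⟩
              rw [Equiv.swap_apply_of_ne_of_ne hg₁a hg₁c]
              exact Or.inl rfl
            · refine ⟨Or.inr (Or.inr hxK), ?_⟩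
              rw [swapK a c hanK hcnK x hxK]
              exact Or.inr hxK
        · intro x hx
          rcases mem_insert.1 hx with rfl | hxK
          · rw [Equiv.swap_apply_of_ne_of_ne hg₁a hg₁c]
          · rw [swapK a c hanK hcnK x hxK]
      have e6b : pres (swap c a) (insert c K) *
          pres (swap a c) (insert g₁ (insert a K)) = pres 1 (insert c K) := by
        apply pres_mul_eq
        · apply filter_true_of_mem
          intro x hx
          rcases mem_insert.1 hx with rfl | hxK
          · rw [Equiv.swap_apply_left]
            exact mem_insert_of_mem (mem_insert_self _ _)
          · rw [swapK c a hcnK hanK x hxK]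
            exact mem_insert_of_mem (mem_insert_of_mem hxK)
        · intro x hx
          rw [Equiv.Perm.one_apply]
          rcases mem_insert.1 hx with rfl | hxK
          · rw [Equiv.swap_apply_left, Equiv.swap_apply_left]
          · rw [swapK c a hcnK hanK x hxK, swapK a c hanK hcnK x hxK]
      exact ((moveB (cond1 1 a hanK) (cond1 _ g₁ hg₁K)
          (cond2 _ c a (Ne.symm hac) hcnK hanK) (cond2 _ c g₁ hg₁c.symm hcnK hg₁K)
          (cond1 _ g₁ hg₁K) e4a e4b).trans
        (moveA (cond2 _ c a (Ne.symm hac) hcnK hanK) (cond1 _ g₁ hg₁K)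
          (cond2 1 g₁ a hg₁a hg₁K hanK) (cond1 _ g₁ hg₁K) (cond1 _ c hcnK)
          e5a e5b)).trans
        (moveA (cond1 _ c hcnK) (cond1 _ g₁ hg₁K) (cond2 _ g₁ a hg₁a hg₁K hanK)
          (cond1 _ g₁ hg₁K) (cond1 1 c hcnK) e6a e6b)
  -- ==================== MOVE 7 (γ side) ====================
  have hICSc : ∀ x ∈ insert c K, x ∈ Sc := by
    intro x hx
    rw [hSc2, ← hKK']
    exact hx
  have e7a : pres 1 (insert c K) * pres ((swap g₁ (Pc.symm q')).trans Pc)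
      (insert g₁ (insert c K)) = γ := by
    rw [hPc, hSc2, ← hKK']
    apply pres_mul_eq
    · apply filter_true_of_mem
      intro x hx
      rw [Equiv.Perm.one_apply]
      exact mem_insert_of_mem hx
    · intro x hx
      rw [Equiv.Perm.one_apply, Equiv.trans_apply,
        Equiv.swap_apply_of_ne_of_ne ?h1 (hPsymq' x (hICSc x hx))]
      case h1 =>
        rcases mem_insert.1 hx with rfl | hxK
        · exact hg₁c.symm
        · exact ne_of_mem_of_not_mem hxK hg₁K
  have e7b : pres ((swap g₁ (Pc.symm q')).trans Pc) (insert g₁ (insert c K)) * δ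
      = pres ((swap g₁ (Qe.symm s')).trans Qe) (insert g₁ K) := by
    rw [hPd]
    apply pres_mul_eq
    · ext x
      simp only [mem_filter, mem_insert]
      constructor
      · rintro ⟨rfl | rfl | hxK, hmem⟩
        · exact Or.inl rfl
        · exfalso
          rw [Equiv.trans_apply, Equiv.swap_apply_of_ne_of_ne hg₁c.symm
            (hPsymq' x hcSc)] at hmem
          exact hpc hmem
        · exact Or.inr hxK
      · rintro (rfl | hxK)
        · refine ⟨Or.inl rfl, ?_⟩
          rw [Equiv.trans_apply, Equiv.swap_apply_left, Equiv.apply_symm_apply]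
          exact hq'Sd
        · refine ⟨Or.inr (Or.inr hxK), ?_⟩
          rw [Equiv.trans_apply, Equiv.swap_apply_of_ne_of_ne
            (ne_of_mem_of_not_mem hxK hg₁K) (hPsymq' x (hK'Sc (hKK' ▸ hxK)))]
          exact hK'filter x hxK
    · intro x hx
      rcases mem_insert.1 hx with rfl | hxK
      · rw [Equiv.trans_apply, Equiv.swap_apply_left, Equiv.apply_symm_apply,
          Equiv.trans_apply, Equiv.swap_apply_left, Equiv.apply_symm_apply]
        exact hs'
      · rw [Equiv.trans_apply, Equiv.swap_apply_of_ne_of_ne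
          (ne_of_mem_of_not_mem hxK hg₁K) (hPsymq' x (hK'Sc (hKK' ▸ hxK))),
          Equiv.trans_apply, swapK g₁ (Qe.symm s') hg₁K hQsymmS' x hxK]
        have hv := hvalQ x hxK
        rw [← hQ'def] at hv
        exact hv.symm
  have step7 := moveB (n := n) (m := r + 2) (i := r + 1) condγ condδ
    (cond1 1 c hcnK) (cond2 _ g₁ c hg₁c hg₁K hcnK) (cond1 _ g₁ hg₁K) e7a e7b
  exact ((step1.trans stepS).trans stepA).trans step7.symm
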